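/- On a weak nearly Sasakian manifold M^{2n+1}(φ,Q,ξ,η,g), the Reeb vector field ξ is geodesic, i.e. ∇_ξ ξ = 0; moreover, if condition (4) holds, then ∇_ξ Q̃ = 0, i.e. (∇_ξ Q̃)X = 0 for every vector field X. -/

import Mathlib

/-- An abstract (Koszul-style) model of the algebra of smooth vector fields on a
`(2n+1)`-dimensional Riemannian manifold `M` carrying a weak nearly Sasakian
structure `(φ, Q, ξ, η, g)`: `VF` is the space of (smooth) vector fields, `fsmul`
is multiplication of a vector field by a smooth function `M → ℝ`, `lie` is the
Lie bracket, `deriv X f` is the derivative of the function `f` in the direction of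
the vector field `X`, `g` is the Riemannian metric, `cov` is its Levi-Civita
connection, and `frame` is an orthonormal frame (encoding that `dim M = 2n+1`).
The axioms are: `VF` is a module over functions, `deriv` is a derivation, `g` is a
symmetric positive definite function-bilinear form, `cov` is a torsion-free metric
connection, `φ` and `Q` are `(1,1)`-tensor fields with `Q` nonsingular, `η` is a
1-form, `φ² = -Q + η ⊗ ξ`, `η(ξ) = 1`, `Qξ = ξ`, `ker η` is `φ`-invariant,
`g(φX, φY) = g(X, QY) - η(X)η(Y)`, and the nearly Sasakian condition
`(∇_Y φ)Y = g(Y,Y) ξ - η(Y) Y`. -/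
structure WeakNearlySasakianManifold (M : Type*) (n : ℕ) where
  VF : Type*
  [instAddCommGroup : AddCommGroup VF]
  [instModule : Module ℝ VF]
  fsmul : (M → ℝ) → VF → VF
  lie : VF → VF → VF
  deriv : VF → (M → ℝ) → M → ℝ
  g : VF → VF → M → ℝ
  cov : VF → VF → VF
  phi : VF → VF
  Q : VF → VF
  xi : VF
  eta : VF → M → ℝ
  frame : Fin (2 * n + 1) → VF
  npos : 1 ≤ n
  -- `fsmul` makes `VF` a module over the smooth functions
  fsmul_one : ∀ X, fsmul 1 X = X
  fsmul_add : ∀ f X Y, fsmul f (X + Y) = fsmul f X + fsmul f Y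
  add_fsmul : ∀ f₁ f₂ X, fsmul (f₁ + f₂) X = fsmul f₁ X + fsmul f₂ X
  mul_fsmul : ∀ f₁ f₂ X, fsmul (f₁ * f₂) X = fsmul f₁ (fsmul f₂ X)
  fsmul_const : ∀ (c : ℝ) X, fsmul (fun _ => c) X = c • X
  -- `deriv` is a derivation in the function, tensorial in the vector field
  deriv_add : ∀ X f₁ f₂, deriv X (f₁ + f₂) = deriv X f₁ + deriv X f₂
  deriv_mul : ∀ X f₁ f₂, deriv X (f₁ * f₂) = f₁ * deriv X f₂ + f₂ * deriv X f₁
  deriv_const : ∀ X (c : ℝ), deriv X (fun _ => c) = 0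
  deriv_add_vf : ∀ X Y f, deriv (X + Y) f = deriv X f + deriv Y f
  deriv_fsmul : ∀ f X k, deriv (fsmul f X) k = f * deriv X k
  -- the Lie bracket
  lie_antisymm : ∀ X Y, lie X Y = -lie Y X
  lie_add_right : ∀ X Y Z, lie X (Y + Z) = lie X Y + lie X Z
  lie_leibniz : ∀ X f Y, lie X (fsmul f Y) = fsmul f (lie X Y) + fsmul (deriv X f) Y
  -- the Riemannian metric
  g_symm : ∀ X Y, g X Y = g Y X
  g_add_left : ∀ X Y Z, g (X + Y) Z = g X Z + g Y Z
  g_fsmul_left : ∀ f X Y, g (fsmul f X) Y = f * g X Y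
  g_nonneg : ∀ X p, 0 ≤ g X X p
  g_nondegenerate : ∀ X, g X X = 0 → X = 0
  -- the Levi-Civita connection
  cov_add_left : ∀ X Y Z, cov (X + Y) Z = cov X Z + cov Y Z
  cov_add_right : ∀ X Y Z, cov X (Y + Z) = cov X Y + cov X Z
  cov_fsmul_left : ∀ f X Y, cov (fsmul f X) Y = fsmul f (cov X Y)
  cov_leibniz : ∀ f X Y, cov X (fsmul f Y) = fsmul f (cov X Y) + fsmul (deriv X f) Y
  cov_torsion_free : ∀ X Y, cov X Y - cov Y X = lie X Y
  cov_metric : ∀ X Y Z, deriv X (g Y Z) = g (cov X Y) Z + g Y (cov X Z)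
  -- `φ`, `Q` are `(1,1)`-tensor fields, `Q` nonsingular, `η` is a 1-form
  phi_add : ∀ X Y, phi (X + Y) = phi X + phi Y
  phi_fsmul : ∀ f X, phi (fsmul f X) = fsmul f (phi X)
  Q_add : ∀ X Y, Q (X + Y) = Q X + Q Y
  Q_fsmul : ∀ f X, Q (fsmul f X) = fsmul f (Q X)
  Q_bijective : Function.Bijective Q
  eta_add : ∀ X Y, eta (X + Y) = eta X + eta Y
  eta_fsmul : ∀ f X, eta (fsmul f X) = f * eta X
  -- the weak almost contact metric conditions
  phi_phi : ∀ X, phi (phi X) = -Q X + fsmul (eta X) xi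
  eta_xi : eta xi = 1
  Q_xi : Q xi = xi
  phi_invariant : ∀ X, eta X = 0 → eta (phi X) = 0
  metric_compat : ∀ X Y, g (phi X) (phi Y) = g X (Q Y) - eta X * eta Y
  -- an orthonormal frame: `M` has dimension `2 * n + 1`
  frame_orthonormal : ∀ i j, g (frame i) (frame j) = fun _ => if i = j then (1 : ℝ) else 0
  frame_spanning : ∀ X, ∃ c : Fin (2 * n + 1) → M → ℝ, X = ∑ i, fsmul (c i) (frame i)
  -- the weak nearly Sasakian condition `(∇_Y φ)Y = g(Y,Y) ξ - η(Y) Y`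
  nearlySasakian : ∀ Y, cov Y (phi Y) - phi (cov Y Y) = fsmul (g Y Y) xi - fsmul (eta Y) Y

attribute [instance] WeakNearlySasakianManifold.instAddCommGroup
attribute [instance] WeakNearlySasakianManifold.instModule

namespace WeakNearlySasakianManifold

variable {M : Type*} {n : ℕ} (S : WeakNearlySasakianManifold M n)

/-- `(∇_X φ) Y` -/
def covPhi (X Y : S.VF) : S.VF := S.cov X (S.phi Y) - S.phi (S.cov X Y)

/-- the tensor `Q̃ = Q - id` -/
def Qt (X : S.VF) : S.VF := S.Q X - X

/-- `(∇_X Q̃) Y` -/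
def covQt (X Y : S.VF) : S.VF := S.cov X (S.Qt Y) - S.Qt (S.cov X Y)

/-- the tensor `h = ∇ξ + φ` -/
def h (X : S.VF) : S.VF := S.cov X S.xi + S.phi X

/-- `(∇_X h) Y` -/
def covh (X Y : S.VF) : S.VF := S.cov X (S.h Y) - S.h (S.cov X Y)

/-- the tensor `(h - φ)` -/
def hmphi (X : S.VF) : S.VF := S.h X - S.phi X

/-- `(∇_X (h - φ)) Y` -/
def covhmphi (X Y : S.VF) : S.VF := S.cov X (S.hmphi Y) - S.hmphi (S.cov X Y)

/-- the Riemann curvature tensor `R_{X,Y} Z = ∇_X ∇_Y Z - ∇_Y ∇_X Z - ∇_{[X,Y]} Z` -/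
def R (X Y Z : S.VF) : S.VF :=
  S.cov X (S.cov Y Z) - S.cov Y (S.cov X Z) - S.cov (S.lie X Y) Z

/-- Condition (4): `(∇_X Q̃) Y = 0` for every vector field `X` and every `Y ∈ ker η`. -/
def Cond4 : Prop := ∀ X Y : S.VF, S.eta Y = 0 → S.covQt X Y = 0

/-- Condition (5): `R_{Q̃X, Y} Z ∈ ker η` for every vector field `X` and all `Y, Z ∈ ker η`. -/
def Cond5 : Prop :=
  ∀ X Y Z : S.VF, S.eta Y = 0 → S.eta Z = 0 → S.eta (S.R (S.Qt X) Y Z) = 0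

/-- the trace of a `(1,1)`-tensor field -/
def trace (A : S.VF → S.VF) : M → ℝ := ∑ i, S.g (A (S.frame i)) (S.frame i)

/-- the Ricci tensor `Ric(X,Y) = Σᵢ g(R_{Eᵢ,X} Y, Eᵢ)` -/
def Ric (X Y : S.VF) : M → ℝ := ∑ i, S.g (S.R (S.frame i) X Y) (S.frame i)

end WeakNearlySasakianManifold

namespace WeakNearlySasakianManifold

section Aux

variable {M : Type*} {n : ℕ} (S : WeakNearlySasakianManifold M n)

lemma fsmul_zero' (f : M → ℝ) : S.fsmul f 0 = 0 := by
  have h := S.fsmul_add f 0 0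
  rw [add_zero] at h
  exact add_left_cancel (a := S.fsmul f 0) (by rw [← h, add_zero])

lemma fsmul_zero_fun (X : S.VF) : S.fsmul (0 : M → ℝ) X = 0 := by
  have : (0 : M → ℝ) = fun _ => (0 : ℝ) := rfl
  rw [this, S.fsmul_const, zero_smul]

lemma phi_zero : S.phi 0 = 0 := by
  have h := S.phi_add 0 0
  rw [add_zero] at h
  exact add_left_cancel (a := S.phi 0) (by rw [← h, add_zero])

lemma Q_zero : S.Q 0 = 0 := by
  have h := S.Q_add 0 0
  rw [add_zero] at h
  exact add_left_cancel (a := S.Q 0) (by rw [← h, add_zero])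

lemma eta_zero : S.eta 0 = 0 := by
  have h := S.eta_add 0 0
  rw [add_zero] at h
  exact add_left_cancel (a := S.eta 0) (by rw [← h, add_zero])

lemma cov_zero_right (X : S.VF) : S.cov X 0 = 0 := by
  have h := S.cov_add_right X 0 0
  rw [add_zero] at h
  exact add_left_cancel (a := S.cov X 0) (by rw [← h, add_zero])

lemma g_zero_right (X : S.VF) : S.g X 0 = 0 := by
  have h := S.g_add_left 0 0 X
  rw [add_zero] at h
  have h0 : S.g 0 X = 0 :=
    add_left_cancel (a := S.g 0 X) (by rw [← h, add_zero])
  rw [S.g_symm]; exact h0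

/-- `φ ξ = 0` -/
lemma phi_xi_eq_zero : S.phi S.xi = 0 := by
  -- φ²ξ = 0
  have h2 : S.phi (S.phi S.xi) = 0 := by
    rw [S.phi_phi, S.Q_xi, S.eta_xi]
    have : S.fsmul 1 S.xi = S.xi := S.fsmul_one S.xi
    rw [this]; abel
  set c : M → ℝ := S.eta (S.phi S.xi) with hc
  -- Q(φξ) = fsmul c ξ
  have h3 : S.Q (S.phi S.xi) = S.fsmul c S.xi := by
    have := S.phi_phi (S.phi S.xi)
    rw [h2, S.phi_zero] at this
    exact (neg_add_eq_zero.mp this.symm)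
  -- φξ = fsmul c ξ (Q injective)
  have hQf : S.Q (S.fsmul c S.xi) = S.fsmul c S.xi := by
    rw [S.Q_fsmul, S.Q_xi]
  have h4 : S.phi S.xi = S.fsmul c S.xi :=
    S.Q_bijective.injective (by rw [h3, hQf])
  -- 0 = fsmul (c*c) ξ
  have h5 : S.fsmul (c * c) S.xi = 0 := by
    rw [S.mul_fsmul, ← h4, ← S.phi_fsmul, ← h4, h2]
  -- apply η
  have h6 : c * c = 0 := by
    have := congrArg S.eta h5
    rw [S.eta_fsmul, S.eta_xi, mul_one, S.eta_zero] at this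
    exact this
  have hc0 : c = 0 := by
    funext p
    have := congrFun h6 p
    exact mul_self_eq_zero.mp this
  rw [h4, hc0, S.fsmul_zero_fun]

/-- `g(X, ξ) = η(X)` -/
lemma g_xi_eq_eta (X : S.VF) : S.g X S.xi = S.eta X := by
  have h := S.metric_compat X S.xi
  rw [S.phi_xi_eq_zero, S.g_zero_right, S.Q_xi, S.eta_xi, mul_one] at h
  exact sub_eq_zero.mp h.symm

end Aux

/-- On a weak nearly Sasakian manifold the Reeb field `ξ` is geodesic, `∇_ξ ξ = 0`;
moreover, under condition (4), `∇_ξ Q̃ = 0`, i.e. `(∇_ξ Q̃) X = 0` for every `X`. -/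
theorem xi_geodesic_and_nabla_xi_Qt_eq_zero {M : Type*} {n : ℕ}
    (S : WeakNearlySasakianManifold M n) :
    S.cov S.xi S.xi = 0 ∧ (S.Cond4 → ∀ X : S.VF, S.covQt S.xi X = 0) := by
  -- g(ξ,ξ) = 1
  have hgxx : S.g S.xi S.xi = 1 := by rw [S.g_xi_eq_eta, S.eta_xi]
  -- nearly Sasakian with Y = ξ gives φ(∇_ξ ξ) = 0
  have hNS := S.nearlySasakian S.xi
  rw [S.phi_xi_eq_zero, S.cov_zero_right, hgxx, S.eta_xi, S.fsmul_one, sub_self] at hNS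
  have hphicov : S.phi (S.cov S.xi S.xi) = 0 := by
    have : (0 : S.VF) - S.phi (S.cov S.xi S.xi) = 0 := hNS
    rw [zero_sub, neg_eq_zero] at this
    exact this
  -- η(∇_ξ ξ) = 0
  have hetacov : S.eta (S.cov S.xi S.xi) = 0 := by
    have hm := S.cov_metric S.xi S.xi S.xi
    rw [hgxx] at hm
    have hd : S.deriv S.xi 1 = 0 := by
      have : (1 : M → ℝ) = fun _ => (1 : ℝ) := rfl
      rw [this, S.deriv_const]
    rw [hd] at hm
    have hsym : S.g S.xi (S.cov S.xi S.xi) = S.g (S.cov S.xi S.xi) S.xi := S.g_symm _ _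
    rw [hsym] at hm
    have h2 : S.g (S.cov S.xi S.xi) S.xi = 0 := by
      funext p
      have := congrFun hm p
      simp only [Pi.zero_apply, Pi.add_apply] at this ⊢
      linarith
    rw [← S.g_xi_eq_eta]; exact h2
  -- from φ(∇_ξξ)=0: Q(∇_ξξ) = fsmul (η(∇_ξξ)) ξ = 0, so ∇_ξξ = 0
  have hgeo : S.cov S.xi S.xi = 0 := by
    have h := S.phi_phi (S.cov S.xi S.xi)
    rw [hphicov, S.phi_zero, hetacov, S.fsmul_zero_fun, add_zero] at h
    have hQ : S.Q (S.cov S.xi S.xi) = 0 := by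
      have := h.symm
      rwa [neg_eq_zero] at this
    exact S.Q_bijective.injective (by rw [hQ, S.Q_zero])
  refine ⟨hgeo, fun h4 X => ?_⟩
  -- Qt ξ = 0
  have hQt_xi : S.Qt S.xi = 0 := by
    unfold Qt; rw [S.Q_xi, sub_self]
  -- Qt is additive
  have hQt_add : ∀ A B : S.VF, S.Qt (A + B) = S.Qt A + S.Qt B := by
    intro A B; unfold Qt; rw [S.Q_add]; abel
  -- covQt ξ (fsmul f ξ) = 0
  have hvert : ∀ f : M → ℝ, S.covQt S.xi (S.fsmul f S.xi) = 0 := by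
    intro f
    unfold covQt
    have h1 : S.Qt (S.fsmul f S.xi) = 0 := by
      unfold Qt; rw [S.Q_fsmul, S.Q_xi, sub_self]
    rw [h1, S.cov_zero_right, zero_sub, neg_eq_zero]
    rw [S.cov_leibniz, hgeo, S.fsmul_zero', zero_add]
    unfold Qt
    rw [S.Q_fsmul, S.Q_xi, sub_self]
  -- decompose X
  set X0 : S.VF := X - S.fsmul (S.eta X) S.xi with hX0
  have hetaX0 : S.eta X0 = 0 := by
    have h1 : X = X0 + S.fsmul (S.eta X) S.xi := by rw [hX0]; abel
    have h2 := congrArg S.eta h1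
    rw [S.eta_add, S.eta_fsmul, S.eta_xi, mul_one] at h2
    exact right_eq_add.mp h2
  have hcovQt_add : ∀ A B : S.VF, S.covQt S.xi (A + B) = S.covQt S.xi A + S.covQt S.xi B := by
    intro A B
    unfold covQt
    rw [S.cov_add_right, hQt_add, hQt_add, S.cov_add_right]
    abel
  have hXdecomp : X = X0 + S.fsmul (S.eta X) S.xi := by rw [hX0]; abel
  rw [hXdecomp, hcovQt_add, h4 S.xi X0 hetaX0, hvert, add_zero]

end WeakNearlySasakianManifold
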